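/- For every ξ ∈ ℂ and λ ∈ ℂ, the sequence w(ξ) : ℤ → ℂ given by w_j = e^{i j ξ h} satisfies (L_p w)_j + λ w_j = 0 for all j ∈ ℤ if and only if P_p(2 cos(ξ h); λ) = 0, where cos denotes the complex cosine. -/

import Mathlib

/-- Coefficients `b_r(λ)` of the characteristic polynomial `P_p(·;λ)` associated with the
symmetric finite difference stencil `a`. -/
noncomputable def bcoef (p : ℕ) (a : ℤ → ℝ) (lam : ℂ) (r : ℕ) : ℂ :=
  if r = 0 then
    ((a 0 : ℂ) + lam) + 2 * ∑ l ∈ Finset.Icc 1 (p / 2), (-1 : ℂ) ^ l * (a (2 * l) : ℂ)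
  else if r % 2 = 0 then
    ∑ l ∈ Finset.Icc (r / 2) (p / 2),
      (-1 : ℂ) ^ (l - r / 2) * (Nat.choose (l + r / 2 - 1) (2 * (r / 2) - 1) : ℂ) *
        ((l : ℂ) / ((r / 2 : ℕ) : ℂ)) * (a (2 * l) : ℂ)
  else
    ∑ l ∈ Finset.Icc (r / 2) ((p + 1) / 2 - 1),
      (-1 : ℂ) ^ (l - r / 2) * (Nat.choose (l + r / 2) (2 * (r / 2)) : ℂ) *
        ((2 * (l : ℂ) + 1) / (2 * ((r / 2 : ℕ) : ℂ) + 1)) * (a (2 * l + 1) : ℂ)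

/-- The polynomial `P_p(z;λ) = Σ_{r=0}^p b_r(λ) z^r`. -/
noncomputable def Ppoly (p : ℕ) (a : ℤ → ℝ) (lam z : ℂ) : ℂ :=
  ∑ r ∈ Finset.range (p + 1), bcoef p a lam r * z ^ r

noncomputable def cc (n k : ℕ) : ℂ := (n : ℂ) / ((n - k : ℕ) : ℂ) * ((n - k).choose k : ℂ)

lemma cc_eq_zero {n k : ℕ} (h : n < 2*k) : cc n k = 0 := by
  have : (n - k).choose k = 0 := Nat.choose_eq_zero_of_lt (by omega)
  simp [cc, this]

lemma cc_diag (j : ℕ) (hj : 1 ≤ j) : cc (2*j) j = 2 := by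
  have h1 : 2*j - j = j := by omega
  have hj0 : (j : ℂ) ≠ 0 := Nat.cast_ne_zero.mpr (by omega)
  simp [cc, h1, Nat.choose_self]
  rw [mul_div_assoc, div_self hj0, mul_one]

lemma cc_rec (m j : ℕ) (hm : 1 ≤ m) : cc (m+2) (j+1) = cc (m+1) (j+1) + cc m j := by
  rcases lt_trichotomy m (2*j) with hc | hc | hc
  · rw [cc_eq_zero (by omega), cc_eq_zero (by omega), cc_eq_zero (by omega)]; ring
  · -- m = 2j
    subst hc
    have hj : 1 ≤ j := by omega
    rw [cc_eq_zero (n := 2*j+1) (by omega)]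
    have e1 : 2*j + 2 = 2*(j+1) := by ring
    rw [e1, cc_diag (j+1) (by omega), cc_diag j hj]
    ring
  · -- generic: 2j+1 ≤ m
    obtain ⟨q, rfl⟩ : ∃ q, m = j + q := ⟨m - j, by omega⟩
    have hq : j + 1 ≤ q := by omega
    have e1 : j + q + 2 - (j+1) = q + 1 := by omega
    have e2 : j + q + 1 - (j+1) = q := by omega
    have e3 : j + q - j = q := by omega
    rw [cc, cc, cc, e1, e2, e3]
    have pascal : (q+1).choose (j+1) = q.choose j + q.choose (j+1) := Nat.choose_succ_succ' q j
    have hrec : (q.choose (j+1) : ℂ) * (j+1) = (q.choose j : ℂ) * ((q : ℂ) - j) := by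
      have := Nat.choose_succ_right_eq q j
      have hcast : (q.choose (j+1) : ℂ) * (j+1) = (q.choose j : ℂ) * ((q - j : ℕ) : ℂ) := by
        exact_mod_cast congrArg (Nat.cast : ℕ → ℂ) this
      rw [hcast, Nat.cast_sub (by omega)]
    have hq0 : (q : ℂ) ≠ 0 := Nat.cast_ne_zero.mpr (by omega)
    have hq10 : ((q : ℂ) + 1) ≠ 0 := by
      have : ((q+1 : ℕ) : ℂ) ≠ 0 := Nat.cast_ne_zero.mpr (by omega)
      push_cast at this; exact this
    rw [pascal]
    push_cast
    field_simp
    linear_combination (-1:ℂ) * hrec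

noncomputable def Dick (n : ℕ) (z : ℂ) : ℂ :=
  ∑ k ∈ Finset.range (n + 1), (-1 : ℂ)^k * cc n k * z ^ (n - 2*k)

lemma Dick_one (z : ℂ) : Dick 1 z = z := by
  simp [Dick, Finset.sum_range_succ, cc]

lemma Dick_two (z : ℂ) : Dick 2 z = z^2 - 2 := by
  simp [Dick, Finset.sum_range_succ, cc]
  norm_num
  ring

lemma cc_zero (n : ℕ) (hn : 1 ≤ n) : cc n 0 = 1 := by
  have h0 : (n : ℂ) ≠ 0 := Nat.cast_ne_zero.mpr (by omega)
  simp [cc, div_self h0]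

lemma Dick_rec (m : ℕ) (hm : 1 ≤ m) (z : ℂ) :
    Dick (m+2) z = z * Dick (m+1) z - Dick m z := by
  have hstepA : Dick (m+2) z = z^(m+2)
      + ∑ k ∈ Finset.range (m+2), (-1:ℂ)^(k+1) * cc (m+1) (k+1) * z^(m-2*k)
      + ∑ k ∈ Finset.range (m+2), (-1:ℂ)^(k+1) * cc m k * z^(m-2*k) := by
    rw [Dick, Finset.sum_range_succ']
    rw [cc_zero (m+2) (by omega)]
    have : ∀ k ∈ Finset.range (m+2), (-1:ℂ)^(k+1) * cc (m+2) (k+1) * z^(m+2-2*(k+1))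
        = (-1:ℂ)^(k+1) * cc (m+1) (k+1) * z^(m-2*k) + (-1:ℂ)^(k+1) * cc m k * z^(m-2*k) := by
      intro k hk
      rw [cc_rec m k hm]
      have he : m+2-2*(k+1) = m - 2*k := by omega
      rw [he]; ring
    rw [Finset.sum_congr rfl this, Finset.sum_add_distrib]
    simp only [Nat.mul_zero, Nat.sub_zero, pow_zero]
    ring
  have hstepB : ∑ k ∈ Finset.range (m+2), (-1:ℂ)^(k+1) * cc m k * z^(m-2*k) = - Dick m z := by
    rw [Dick, Finset.sum_range_succ (n := m+1), cc_eq_zero (n := m) (k := m+1) (by omega)]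
    rw [← Finset.sum_neg_distrib]
    simp only [mul_zero, zero_mul, add_zero]
    apply Finset.sum_congr rfl
    intro k hk
    ring
  have hstepC : ∑ k ∈ Finset.range (m+2), (-1:ℂ)^(k+1) * cc (m+1) (k+1) * z^(m-2*k)
      = z * Dick (m+1) z - z^(m+2) := by
    have h1 : ∑ k ∈ Finset.range (m+2), (-1:ℂ)^(k+1) * cc (m+1) (k+1) * z^(m-2*k)
        = ∑ k ∈ Finset.range (m+1), (-1:ℂ)^(k+1) * cc (m+1) (k+1) * z^(m-2*k) := by
      rw [Finset.sum_range_succ (n := m+1), cc_eq_zero (n := m+1) (k := m+1+1) (by omega)]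
      ring
    have h2 : z * Dick (m+1) z
        = ∑ k ∈ Finset.range (m+1), (-1:ℂ)^(k+1) * cc (m+1) (k+1) * z^(m-2*k) + z^(m+2) := by
      rw [Dick, Finset.mul_sum, Finset.sum_range_succ']
      rw [cc_zero (m+1) (by omega)]
      have hterm : ∀ k ∈ Finset.range (m+1), z * ((-1:ℂ)^(k+1) * cc (m+1) (k+1) * z^(m+1-2*(k+1)))
          = (-1:ℂ)^(k+1) * cc (m+1) (k+1) * z^(m-2*k) := by
        intro k hk
        by_cases hle : 2*k + 1 ≤ m
        · have he : m - 2*k = (m+1-2*(k+1)) + 1 := by omega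
          rw [he, pow_succ]; ring
        · rw [cc_eq_zero (n := m+1) (k := k+1) (by omega)]; ring
      rw [Finset.sum_congr rfl hterm]
      simp only [Nat.mul_zero, Nat.sub_zero, pow_zero]
      ring
    rw [h1, h2]; ring
  rw [hstepA, hstepB, hstepC]
  ring

lemma Dick_cos : ∀ n : ℕ, 1 ≤ n → ∀ θ : ℂ, Dick n (2*Complex.cos θ) = 2*Complex.cos ((n:ℂ)*θ) := by
  intro n
  induction n using Nat.strong_induction_on with
  | _ n ih =>
    match n with
    | 0 => intro h; omega
    | 1 => intro _ θ; rw [Dick_one]; norm_num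
    | 2 =>
      intro _ θ
      rw [Dick_two]
      have : ((2:ℕ):ℂ)*θ = 2*θ := by push_cast; ring
      rw [this, Complex.cos_two_mul]
      ring
    | (m+3) =>
      intro _ θ
      rw [show m+3 = (m+1)+2 from rfl, Dick_rec (m+1) (by omega)]
      rw [ih (m+2) (by omega) (by omega) θ, ih (m+1) (by omega) (by omega) θ]
      have e1 : ((m+2:ℕ):ℂ)*θ + θ = ((m+1+2:ℕ):ℂ)*θ := by push_cast; ring
      have e2 : ((m+2:ℕ):ℂ)*θ - θ = ((m+1:ℕ):ℂ)*θ := by push_cast; ring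
      have key := Complex.cos_add (((m+2:ℕ):ℂ)*θ) θ
      have key2 := Complex.cos_sub (((m+2:ℕ):ℂ)*θ) θ
      rw [e1] at key
      rw [e2] at key2
      linear_combination (-2:ℂ) * key - 2 * key2

lemma coef_even (l k : ℕ) (hk : 1 ≤ k) (hkl : k ≤ l) :
    cc (2*l) (l-k) = ((l+k-1).choose (2*k-1) : ℂ) * ((l:ℂ)/(k:ℂ)) := by
  have e1 : 2*l - (l-k) = l+k := by omega
  rw [cc, e1]
  have e2 : l - k = (l+k) - 2*k := by omega
  rw [e2, Nat.choose_symm (by omega)]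
  have hn : (l+k) * ((l+k-1).choose (2*k-1)) = ((l+k).choose (2*k)) * (2*k) := by
    have h := Nat.add_one_mul_choose_eq (l+k-1) (2*k-1)
    rw [show l+k-1+1 = l+k by omega, show 2*k-1+1 = 2*k by omega] at h
    exact h
  have hc : ((l+k : ℕ) : ℂ) * ((l+k-1).choose (2*k-1) : ℂ) = ((l+k).choose (2*k) : ℂ) * (2*k : ℕ) := by
    exact_mod_cast congrArg (Nat.cast : ℕ → ℂ) hn
  have hlk : ((l:ℂ)+(k:ℂ)) ≠ 0 := by
    have : ((l+k : ℕ) : ℂ) ≠ 0 := Nat.cast_ne_zero.mpr (by omega)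
    push_cast at this; exact this
  have hk0 : (k:ℂ) ≠ 0 := Nat.cast_ne_zero.mpr (by omega)
  push_cast at hc ⊢
  field_simp
  linear_combination (-(l:ℂ)) * hc

lemma coef_odd (l k : ℕ) (hkl : k ≤ l) :
    cc (2*l+1) (l-k) = ((l+k).choose (2*k) : ℂ) * ((2*(l:ℂ)+1)/(2*(k:ℂ)+1)) := by
  have e1 : 2*l+1 - (l-k) = l+k+1 := by omega
  rw [cc, e1]
  have e2 : l - k = (l+k+1) - (2*k+1) := by omega
  rw [e2, Nat.choose_symm (by omega)]
  have hn : (l+k+1) * ((l+k).choose (2*k)) = ((l+k+1).choose (2*k+1)) * (2*k+1) := by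
    have h := Nat.add_one_mul_choose_eq (l+k) (2*k)
    exact h
  have hc : ((l+k+1 : ℕ) : ℂ) * ((l+k).choose (2*k) : ℂ) = ((l+k+1).choose (2*k+1) : ℂ) * ((2*k+1 : ℕ) : ℂ) := by
    exact_mod_cast congrArg (Nat.cast : ℕ → ℂ) hn
  have h1 : ((l:ℂ)+(k:ℂ)+1) ≠ 0 := by
    have : ((l+k+1 : ℕ) : ℂ) ≠ 0 := Nat.cast_ne_zero.mpr (by omega)
    push_cast at this; exact this
  have h2 : (2*(k:ℂ)+1) ≠ 0 := by
    have : ((2*k+1 : ℕ) : ℂ) ≠ 0 := Nat.cast_ne_zero.mpr (by omega)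
    push_cast at this; exact this
  push_cast at hc ⊢
  field_simp
  linear_combination (-(2*(l:ℂ)+1)) * hc

lemma Dick_trunc (n m : ℕ) (hn : n ≤ 2*m+1) (hm : m ≤ n) (z : ℂ) :
    Dick n z = ∑ k ∈ Finset.range (m+1), (-1:ℂ)^k * cc n k * z ^ (n - 2*k) := by
  rw [Dick]
  symm
  apply Finset.sum_subset
  · intro x hx; simp only [Finset.mem_range] at *; omega
  · intro x hx hxn
    simp only [Finset.mem_range] at *
    rw [cc_eq_zero (by omega)]
    ring

lemma Dick_even (l : ℕ) (hl : 1 ≤ l) (z : ℂ) :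
    Dick (2*l) z = 2*(-1:ℂ)^l
      + ∑ k ∈ Finset.Icc 1 l, (-1:ℂ)^(l-k) * (((l+k-1).choose (2*k-1) : ℕ) : ℂ) * ((l:ℂ)/(k:ℂ)) * z^(2*k) := by
  rw [Dick_trunc (2*l) l (by omega) (by omega)]
  rw [← Finset.sum_range_reflect]
  have hterm : ∀ k ∈ Finset.range (l+1),
      (-1:ℂ)^(l+1-1-k) * cc (2*l) (l+1-1-k) * z ^ (2*l - 2*(l+1-1-k))
      = (-1:ℂ)^(l-k) * cc (2*l) (l-k) * z ^ (2*k) := by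
    intro k hk
    simp only [Finset.mem_range] at hk
    have e1 : l+1-1-k = l-k := by omega
    have e2 : 2*l - 2*(l-k) = 2*k := by omega
    rw [e1, e2]
  rw [Finset.sum_congr rfl hterm, Finset.sum_range_succ']
  have h0 : (-1:ℂ)^(l-0) * cc (2*l) (l-0) * z^(2*0) = 2*(-1:ℂ)^l := by
    have e : l - 0 = l := rfl
    rw [e, show 2*l = 2*l from rfl]
    have : cc (2*l) l = 2 := cc_diag l hl
    rw [this]
    ring
  rw [h0]
  have hIcc : ∑ k ∈ Finset.Icc 1 l, (-1:ℂ)^(l-k) * (((l+k-1).choose (2*k-1) : ℕ) : ℂ) * ((l:ℂ)/(k:ℂ)) * z^(2*k)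
      = ∑ k ∈ Finset.range l, (-1:ℂ)^(l-(k+1)) * (((l+(k+1)-1).choose (2*(k+1)-1) : ℕ) : ℂ) * ((l:ℂ)/((k+1:ℕ):ℂ)) * z^(2*(k+1)) := by
    rw [← Finset.Ico_add_one_right_eq_Icc, Finset.sum_Ico_eq_sum_range]
    apply Finset.sum_congr (by congr 1)
    intro k hk
    simp only [Finset.mem_range] at hk
    push_cast
    rw [show (1:ℂ)+(k:ℂ) = (k:ℂ)+1 by ring, show 1+k = k+1 by omega]
  rw [hIcc]
  have hterm2 : ∀ k ∈ Finset.range l,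
      (-1:ℂ)^(l-(k+1)) * cc (2*l) (l-(k+1)) * z^(2*(k+1))
      = (-1:ℂ)^(l-(k+1)) * (((l+(k+1)-1).choose (2*(k+1)-1) : ℕ) : ℂ) * ((l:ℂ)/((k+1:ℕ):ℂ)) * z^(2*(k+1)) := by
    intro k hk
    simp only [Finset.mem_range] at hk
    rw [coef_even l (k+1) (by omega) (by omega)]
    ring
  rw [Finset.sum_congr rfl hterm2]
  ring

lemma Dick_odd (l : ℕ) (z : ℂ) :
    Dick (2*l+1) z = ∑ k ∈ Finset.range (l+1),
      (-1:ℂ)^(l-k) * (((l+k).choose (2*k) : ℕ) : ℂ) * ((2*(l:ℂ)+1)/(2*(k:ℂ)+1)) * z^(2*k+1) := by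
  rw [Dick_trunc (2*l+1) l (by omega) (by omega)]
  rw [← Finset.sum_range_reflect]
  apply Finset.sum_congr rfl
  intro k hk
  simp only [Finset.mem_range] at hk
  have e1 : l+1-1-k = l-k := by omega
  have e2 : 2*l+1 - 2*(l-k) = 2*k+1 := by omega
  rw [e1, e2, coef_odd l k (by omega)]
  ring

lemma sum_parity_split (p : ℕ) (f : ℕ → ℂ) :
    ∑ r ∈ Finset.Icc 1 p, f r
      = (∑ k ∈ Finset.Icc 1 (p/2), f (2*k)) + ∑ k ∈ Finset.range ((p+1)/2), f (2*k+1) := by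
  induction p with
  | zero => simp
  | succ p ih =>
    rw [Finset.sum_Icc_succ_top (by omega), ih]
    by_cases hpar : (p+1) % 2 = 0
    · have h1 : (p+1)/2 = p/2 + 1 := by omega
      have h2 : (p+1+1)/2 = (p+1)/2 := by omega
      rw [h2, h1, Finset.sum_Icc_succ_top (by omega)]
      rw [show 2*(p/2+1) = p+1 by omega]
      ring
    · have h1 : (p+1)/2 = p/2 := by omega
      have h2 : (p+1+1)/2 = (p+1)/2 + 1 := by omega
      rw [h2, h1, Finset.sum_range_succ]
      rw [show 2*(p/2)+1 = p+1 by omega]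
      ring

lemma bcoef_even (p : ℕ) (a : ℤ → ℝ) (lam : ℂ) (k : ℕ) (hk : 1 ≤ k) :
    bcoef p a lam (2*k) = ∑ l ∈ Finset.Icc k (p/2),
      (-1:ℂ)^(l-k) * (((l+k-1).choose (2*k-1) : ℕ) : ℂ) * ((l:ℂ)/((k:ℕ):ℂ)) * (a (2*l) : ℂ) := by
  rw [bcoef]
  rw [if_neg (by omega), if_pos (by omega)]
  rw [Nat.mul_div_cancel_left k (by norm_num)]

lemma bcoef_odd (p : ℕ) (a : ℤ → ℝ) (lam : ℂ) (k : ℕ) :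
    bcoef p a lam (2*k+1) = ∑ l ∈ Finset.Icc k ((p+1)/2 - 1),
      (-1:ℂ)^(l-k) * (((l+k).choose (2*k) : ℕ) : ℂ) * ((2*(l:ℂ)+1)/(2*((k:ℕ):ℂ)+1)) * (a (2*l+1) : ℂ) := by
  rw [bcoef]
  rw [if_neg (by omega), if_neg (by omega)]
  rw [show (2*k+1)/2 = k by omega]

lemma sum_range_shift (p : ℕ) (F : ℕ → ℂ) :
    ∑ r ∈ Finset.range (p+1), F r = F 0 + ∑ r ∈ Finset.Icc 1 p, F r := by
  rw [Finset.sum_range_succ' F p]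
  rw [← Finset.Ico_add_one_right_eq_Icc, Finset.sum_Ico_eq_sum_range]
  rw [show p+1-1 = p from rfl, add_comm]
  congr 1
  apply Finset.sum_congr rfl
  intro k _
  rw [add_comm 1 k]

lemma Ppoly_eq (p : ℕ) (hp : 1 ≤ p) (a : ℤ → ℝ) (lam z : ℂ) :
    Ppoly p a lam z = ((a 0 : ℂ) + lam) + ∑ l ∈ Finset.Icc 1 p, (a l : ℂ) * Dick l z := by
  rw [Ppoly, sum_range_shift, sum_parity_split p (fun r => bcoef p a lam r * z ^ r),
      sum_parity_split p (fun l => (a l : ℂ) * Dick l z)]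
  rw [bcoef]
  rw [if_pos rfl]
  -- Even part
  have hE : ∑ k ∈ Finset.Icc 1 (p/2), bcoef p a lam (2*k) * z^(2*k)
      + 2 * ∑ l ∈ Finset.Icc 1 (p/2), (-1:ℂ)^l * (a (2*l) : ℂ)
      = ∑ l ∈ Finset.Icc 1 (p/2), (a (2*l) : ℂ) * Dick (2*l) z := by
    have h1 : ∑ k ∈ Finset.Icc 1 (p/2), bcoef p a lam (2*k) * z^(2*k)
        = ∑ k ∈ Finset.Icc 1 (p/2), ∑ l ∈ Finset.Icc k (p/2),
            (-1:ℂ)^(l-k) * (((l+k-1).choose (2*k-1) : ℕ) : ℂ) * ((l:ℂ)/((k:ℕ):ℂ)) * (a (2*l) : ℂ) * z^(2*k) := by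
      apply Finset.sum_congr rfl
      intro k hk
      simp only [Finset.mem_Icc] at hk
      rw [bcoef_even p a lam k hk.1, Finset.sum_mul]
    rw [h1]
    rw [Finset.sum_comm' (s' := fun l => Finset.Icc 1 l) (t' := Finset.Icc 1 (p/2))
      (h := by intro x y; simp only [Finset.mem_Icc]; omega)]
    rw [Finset.mul_sum, ← Finset.sum_add_distrib]
    apply Finset.sum_congr rfl
    intro l hl
    simp only [Finset.mem_Icc] at hl
    rw [Dick_even l hl.1 z, mul_add, Finset.mul_sum, add_comm]
    congr 1
    · ring
    · apply Finset.sum_congr rfl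
      intro k _
      ring
  -- Odd part
  have hO : ∑ k ∈ Finset.range ((p+1)/2), bcoef p a lam (2*k+1) * z^(2*k+1)
      = ∑ l ∈ Finset.range ((p+1)/2), (a (2*l+1) : ℂ) * Dick (2*l+1) z := by
    have h1 : ∑ k ∈ Finset.range ((p+1)/2), bcoef p a lam (2*k+1) * z^(2*k+1)
        = ∑ k ∈ Finset.range ((p+1)/2), ∑ l ∈ Finset.Icc k ((p+1)/2-1),
            (-1:ℂ)^(l-k) * (((l+k).choose (2*k) : ℕ) : ℂ) * ((2*(l:ℂ)+1)/(2*((k:ℕ):ℂ)+1)) * (a (2*l+1) : ℂ) * z^(2*k+1) := by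
      apply Finset.sum_congr rfl
      intro k hk
      rw [bcoef_odd p a lam k, Finset.sum_mul]
    rw [h1]
    rw [Finset.sum_comm' (s' := fun l => Finset.range (l+1)) (t' := Finset.range ((p+1)/2))
      (h := by intro x y; simp only [Finset.mem_Icc, Finset.mem_range]; omega)]
    apply Finset.sum_congr rfl
    intro l hl
    rw [Dick_odd l z, Finset.mul_sum]
    apply Finset.sum_congr rfl
    intro k hk
    ring
  rw [hO]
  push_cast at hE ⊢
  linear_combination hE

lemma sym_sum (p : ℕ) (f : ℤ → ℂ) :
    ∑ r ∈ Finset.Icc (-(p:ℤ)) (p:ℤ), f r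
      = f 0 + ∑ l ∈ Finset.Icc 1 p, (f (l:ℤ) + f (-(l:ℤ))) := by
  induction p with
  | zero => simp
  | succ p ih =>
    have hset : Finset.Icc (-(p+1:ℕ):ℤ) ((p+1:ℕ):ℤ)
        = insert (-(p+1:ℕ):ℤ) (insert ((p+1:ℕ):ℤ) (Finset.Icc (-(p:ℕ):ℤ) ((p:ℕ):ℤ))) := by
      ext x
      simp only [Finset.mem_Icc, Finset.mem_insert]
      push_cast
      omega
    rw [hset, Finset.sum_insert (by simp only [Finset.mem_insert, Finset.mem_Icc]; push_cast; omega),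
        Finset.sum_insert (by simp only [Finset.mem_Icc]; push_cast; omega), ih,
        Finset.sum_Icc_succ_top (by omega)]
    push_cast
    ring

lemma hpair (t : ℂ) : Complex.exp (Complex.I*t) + Complex.exp (Complex.I*(-t)) = 2 * Complex.cos t := by
  rw [show Complex.I*t = t*Complex.I by ring, show Complex.I*(-t) = (-t)*Complex.I by ring,
      Complex.exp_mul_I, Complex.exp_mul_I, Complex.cos_neg, Complex.sin_neg]
  ring

/-- the mode `w_j = e^{i j ξ h}` solves `L_p w + λ w = 0` iff
`P_p(2 cos(ξ h); λ) = 0`. -/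
theorem stmt1 (p : ℕ) (hp : 1 ≤ p) (h : ℝ) (hh : 0 < h)
    (a : ℤ → ℝ) (hsym : ∀ r : ℤ, a (-r) = a r)
    (ξ lam : ℂ) :
    (∀ j : ℤ, (∑ r ∈ Finset.Icc (-(p : ℤ)) (p : ℤ),
        (a r : ℂ) * Complex.exp (Complex.I * ((j + r : ℤ) : ℂ) * ξ * (h : ℂ))) +
        lam * Complex.exp (Complex.I * (j : ℂ) * ξ * (h : ℂ)) = 0) ↔
    Ppoly p a lam (2 * Complex.cos (ξ * (h : ℂ))) = 0 := by
  set θ : ℂ := ξ * (h : ℂ) with hθ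
  have key : ∀ j : ℤ, (∑ r ∈ Finset.Icc (-(p : ℤ)) (p : ℤ),
        (a r : ℂ) * Complex.exp (Complex.I * ((j + r : ℤ) : ℂ) * ξ * (h : ℂ))) +
        lam * Complex.exp (Complex.I * (j : ℂ) * ξ * (h : ℂ))
      = Complex.exp (Complex.I * (j : ℂ) * ξ * (h : ℂ)) * Ppoly p a lam (2 * Complex.cos θ) := by
    intro j
    have hfac : ∀ r : ℤ, (a r : ℂ) * Complex.exp (Complex.I * ((j + r : ℤ) : ℂ) * ξ * (h : ℂ))
        = Complex.exp (Complex.I * (j : ℂ) * ξ * (h : ℂ)) * ((a r : ℂ) * Complex.exp (Complex.I * ((r:ℤ):ℂ) * θ)) := by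
      intro r
      have harg : Complex.I * ((j + r : ℤ) : ℂ) * ξ * (h : ℂ)
          = Complex.I * (j:ℂ) * ξ * (h:ℂ) + Complex.I * ((r:ℤ):ℂ) * θ := by
        rw [hθ]; push_cast; ring
      rw [harg, Complex.exp_add]; ring
    rw [Finset.sum_congr rfl (fun r _ => hfac r), ← Finset.mul_sum]
    rw [sym_sum p (fun r => (a r : ℂ) * Complex.exp (Complex.I * ((r:ℤ):ℂ) * θ))]
    rw [Ppoly_eq p hp a lam]
    have hzero : ((0:ℤ):ℂ) = 0 := by norm_num
    have hf0 : (a (0:ℤ) : ℂ) * Complex.exp (Complex.I * ((0:ℤ):ℂ) * θ) = (a 0 : ℂ) := by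
      rw [hzero]
      simp
    have hsum2 : ∑ l ∈ Finset.Icc 1 p,
        ((a (l:ℤ) : ℂ) * Complex.exp (Complex.I * (((l:ℕ):ℤ):ℂ) * θ)
          + (a (-(l:ℤ)) : ℂ) * Complex.exp (Complex.I * ((((-(l:ℤ)) : ℤ)):ℂ) * θ))
        = ∑ l ∈ Finset.Icc 1 p, (a (l:ℤ) : ℂ) * Dick l (2 * Complex.cos θ) := by
      apply Finset.sum_congr rfl
      intro l hl
      simp only [Finset.mem_Icc] at hl
      rw [hsym (l:ℤ), Dick_cos l hl.1 θ]
      have e1 : Complex.I * (((l:ℕ):ℤ):ℂ) * θ = Complex.I * ((l:ℕ):ℂ) * θ := by push_cast; ring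
      have e2 : Complex.I * ((((-(l:ℤ)) : ℤ)):ℂ) * θ = Complex.I * (-(((l:ℕ):ℂ) * θ)) := by push_cast; ring
      rw [e1, e2, show Complex.I * ((l:ℕ):ℂ) * θ = Complex.I * (((l:ℕ):ℂ) * θ) by ring]
      rw [← mul_add, hpair (((l:ℕ):ℂ) * θ)]
    rw [hf0, hsum2]
    ring
  constructor
  · intro hall
    have h0 := hall 0
    rw [key 0] at h0
    have hexp : Complex.exp (Complex.I * ((0:ℤ):ℂ) * ξ * (h:ℂ)) ≠ 0 := Complex.exp_ne_zero _
    exact (mul_eq_zero.mp h0).resolve_left hexp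
  · intro hP j
    rw [key j, hP, mul_zero]
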